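/- Let m > 0, p > 1 with γ := m(p-1)-1 > 0, and f ∈ C¹([0,1]) with f(0)=f(1)=0 and ∫₀¹ u^{m-1} f(u) du > 0. Set h := (mp/(p-1)) ∫₀¹ u^{m-1} f(u) du > 0 and define T₀(X) = X^{-1/(p-1)} [h - (mp/(p-1)) ∫₀^X u^{m-1} f(u) du]^{1/p} for 0 < X ≤ 1. Then T₀ solves the c = 0 trajectory equation dZ/dX = -(Z^p + m X^{γ/(p-1)-1} f(X)) / ((p-1) X Z^{p-1}) on its domain of positivity, satisfies T₀(1) = 0, and T₀(X) → +∞ as X → 0⁺. -/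

import Mathlib

open Real Set Filter intervalIntegral MeasureTheory Topology

lemma aux_integrable (m : ℝ) (hm : 0 < m) (f : ℝ → ℝ) (hf : ContDiffOn ℝ 1 f (Icc 0 1))
    (hf0 : f 0 = 0) :
    IntegrableOn (fun u : ℝ => u ^ (m - 1) * f u) (Ioc (0:ℝ) 1) := by
  obtain ⟨C, hC⟩ := IsCompact.exists_bound_of_continuousOn isCompact_Icc
    (hf.continuousOn_derivWithin (uniqueDiffOn_Icc one_pos) le_rfl)
  have hfb : ∀ u ∈ Icc (0:ℝ) 1, |f u| ≤ C * u := by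
    intro u hu
    have := Convex.norm_image_sub_le_of_norm_derivWithin_le
      (hf.differentiableOn one_ne_zero) hC (convex_Icc 0 1)
      (left_mem_Icc.2 zero_le_one) hu
    simpa [hf0, abs_of_nonneg hu.1] using this
  have hb : Integrable (fun u : ℝ => C * u ^ m) (volume.restrict (Ioc (0:ℝ) 1)) := by
    have hcont : ContinuousOn (fun u : ℝ => C * u ^ m) (Icc 0 1) :=
      continuousOn_const.mul (fun u _ =>
        (Real.continuousAt_rpow_const u m (Or.inr hm.le)).continuousWithinAt)
    exact (hcont.integrableOn_Icc).mono_set Ioc_subset_Icc_self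
  have hgm : ContinuousOn (fun u : ℝ => u ^ (m - 1) * f u) (Ioc (0:ℝ) 1) := by
    refine ContinuousOn.mul (fun u hu =>
      (Real.continuousAt_rpow_const u (m-1) (Or.inl (ne_of_gt hu.1))).continuousWithinAt)
      (hf.continuousOn.mono Ioc_subset_Icc_self)
  refine hb.mono' (hgm.aestronglyMeasurable measurableSet_Ioc) ?_
  filter_upwards [ae_restrict_mem measurableSet_Ioc] with u hu
  have hu0 : (0:ℝ) < u := hu.1
  have h1 : ‖u ^ (m-1) * f u‖ = u ^ (m-1) * |f u| := by
    rw [norm_mul, Real.norm_eq_abs, Real.norm_eq_abs, abs_of_nonneg (Real.rpow_nonneg hu0.le _)]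
  rw [h1]
  calc u ^ (m-1) * |f u| ≤ u ^ (m-1) * (C * u) :=
        mul_le_mul_of_nonneg_left (hfb u ⟨hu0.le, hu.2⟩) (Real.rpow_nonneg hu0.le _)
    _ = C * u ^ m := by
        rw [show m = (m-1) + 1 by ring, Real.rpow_add_one (ne_of_gt hu0)]; ring


/-- The trajectory entering the saddle point `S(1,0)` at zero speed: with
`h = (mp/(p-1)) ∫₀¹ u^{m-1} f(u) du > 0`, the function
`T₀(X) = X^{-1/(p-1)} [h - (mp/(p-1)) ∫₀^X u^{m-1} f(u) du]^{1/p}` solves the `c = 0`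
trajectory equation on its domain of positivity, satisfies `T₀(1) = 0`, and blows up
as `X → 0⁺`. -/
theorem stmt_5 (m p γ h : ℝ) (hm : 0 < m) (hp : 1 < p)
    (hγ : γ = m * (p - 1) - 1) (hγpos : 0 < γ)
    (f : ℝ → ℝ) (hf : ContDiffOn ℝ 1 f (Icc 0 1)) (hf0 : f 0 = 0) (hf1 : f 1 = 0)
    (hint : 0 < ∫ u in (0:ℝ)..1, u ^ (m - 1) * f u)
    (hh : h = (m * p / (p - 1)) * ∫ u in (0:ℝ)..1, u ^ (m - 1) * f u)
    (T₀ : ℝ → ℝ)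
    (hT₀ : ∀ X, T₀ X = X ^ (-(1 / (p - 1))) *
      (h - (m * p / (p - 1)) * ∫ u in (0:ℝ)..X, u ^ (m - 1) * f u) ^ (1 / p)) :
    (∀ X ∈ Ioo (0:ℝ) 1,
      0 < h - (m * p / (p - 1)) * (∫ u in (0:ℝ)..X, u ^ (m - 1) * f u) →
      HasDerivAt T₀
        (-(T₀ X ^ p + m * X ^ (γ / (p - 1) - 1) * f X) / ((p - 1) * X * T₀ X ^ (p - 1)))
        X) ∧
    T₀ 1 = 0 ∧
    Tendsto T₀ (nhdsWithin 0 (Ioi 0)) atTop := by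
  have hp0 : (0:ℝ) < p := lt_trans one_pos hp
  have hp1 : (0:ℝ) < p - 1 := by linarith
  set k : ℝ := m * p / (p - 1) with hk
  have hk0 : 0 < k := by positivity
  set g : ℝ → ℝ := fun u => u ^ (m - 1) * f u with hg
  have hgint : IntegrableOn g (Ioc (0:ℝ) 1) := aux_integrable m hm f hf hf0
  have hintX : ∀ X ∈ Icc (0:ℝ) 1, IntervalIntegrable g volume 0 X := fun X hX =>
    (intervalIntegrable_iff_integrableOn_Ioc_of_le hX.1).2
      (hgint.mono_set (Ioc_subset_Ioc le_rfl hX.2))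
  have hIccInt : IntegrableOn g (Icc (0:ℝ) 1) := by
    rwa [integrableOn_Icc_iff_integrableOn_Ioc]
  refine ⟨?_, ?_, ?_⟩
  · -- derivative part
    rintro X ⟨hX0, hX1⟩ hGpos
    have hXne : X ≠ 0 := ne_of_gt hX0
    have hmemIcc : X ∈ Icc (0:ℝ) 1 := ⟨hX0.le, hX1.le⟩
    have hGne : h - k * ∫ u in (0:ℝ)..X, g u ≠ 0 := ne_of_gt hGpos
    have hgcontX : ContinuousAt g X := by
      have h1 : ContinuousAt (fun u : ℝ => u ^ (m-1)) X :=
        Real.continuousAt_rpow_const X (m-1) (Or.inl hXne)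
      have h2 : ContinuousAt f X := hf.continuousOn.continuousAt (Icc_mem_nhds hX0 hX1)
      exact h1.mul h2
    have hgO : ContinuousOn g (Ioo (0:ℝ) 1) := fun u hu =>
      (ContinuousAt.mul (Real.continuousAt_rpow_const u (m-1) (Or.inl (ne_of_gt hu.1)))
        (hf.continuousOn.continuousAt (Icc_mem_nhds hu.1 hu.2))).continuousWithinAt
    have hFd : HasDerivAt (fun Y => ∫ u in (0:ℝ)..Y, g u) (g X) X :=
      intervalIntegral.integral_hasDerivAt_right (hintX X hmemIcc)
        (ContinuousOn.stronglyMeasurableAtFilter isOpen_Ioo hgO X ⟨hX0, hX1⟩) hgcontX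
    have hGd : HasDerivAt (fun Y => h - k * ∫ u in (0:ℝ)..Y, g u) (-(k * g X)) X := by
      simpa using ((hFd.const_mul k).const_sub h)
    have hQd : HasDerivAt (fun Y => (h - k * ∫ u in (0:ℝ)..Y, g u) ^ (1/p))
        ((1/p) * (h - k * ∫ u in (0:ℝ)..X, g u) ^ (1/p - 1) * (-(k * g X))) X := by
      have houter := Real.hasDerivAt_rpow_const
        (x := h - k * ∫ u in (0:ℝ)..X, g u) (p := 1/p) (Or.inl hGne)
      have := houter.comp X hGd
      simpa [Function.comp_def] using this
    have hPd : HasDerivAt (fun Y : ℝ => Y ^ (-(1/(p-1))))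
        (-(1/(p-1)) * X ^ (-(1/(p-1)) - 1)) X :=
      Real.hasDerivAt_rpow_const (Or.inl hXne)
    have hTd := hPd.mul hQd
    have hTd' : HasDerivAt T₀
        (-(1/(p-1)) * X ^ (-(1/(p-1)) - 1) * (h - k * ∫ u in (0:ℝ)..X, g u) ^ (1/p)
          + X ^ (-(1/(p-1))) *
            ((1/p) * (h - k * ∫ u in (0:ℝ)..X, g u) ^ (1/p - 1) * (-(k * g X)))) X :=
      hTd.congr_of_eventuallyEq (Eventually.of_forall fun y => hT₀ y)
    convert hTd' using 1
    rw [hT₀ X]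
    set G := h - k * ∫ u in (0:ℝ)..X, g u with hG
    have hGp : 0 < G := hGpos
    have hBpos : (0:ℝ) < X ^ (-(1/(p-1))) := Real.rpow_pos_of_pos hX0 _
    have hQpos : (0:ℝ) < G ^ (1/p) := Real.rpow_pos_of_pos hGp _
    have hpne : p ≠ 0 := hp0.ne'
    have hp1ne : p - 1 ≠ 0 := hp1.ne'
    rw [Real.mul_rpow hBpos.le hQpos.le, Real.mul_rpow hBpos.le hQpos.le,
      ← Real.rpow_mul hX0.le (-(1/(p-1))) p, ← Real.rpow_mul hX0.le (-(1/(p-1))) (p-1),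
      ← Real.rpow_mul hGp.le (1/p) p, ← Real.rpow_mul hGp.le (1/p) (p-1),
      show -(1/(p-1)) * p = -(1/(p-1)) + (-1) by field_simp; ring,
      show -(1/(p-1)) * (p-1) = (-1 : ℝ) by field_simp,
      show (1/p) * p = (1:ℝ) by field_simp,
      show (1/p) * (p-1) = 1 - 1/p by field_simp,
      show γ/(p-1) - 1 = (m - 1) + -(1/(p-1)) by rw [hγ]; field_simp; ring,
      show -(1/(p-1)) - 1 = -(1/(p-1)) + (-1 : ℝ) by ring,
      show (1/p) - 1 = (1/p) + (-1 : ℝ) by ring]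
    simp only [Real.rpow_add hX0, Real.rpow_add hGp, Real.rpow_sub hGp, Real.rpow_neg_one,
      Real.rpow_one, hg, hk]
    field_simp
    ring
  · -- T₀ 1 = 0
    rw [hT₀ 1]
    have h0 : h - k * ∫ u in (0:ℝ)..1, g u = 0 := by rw [hh]; ring
    rw [h0, Real.zero_rpow (by positivity), mul_zero]
  · -- blow-up at 0
    have hhpos : 0 < h := by rw [hh]; positivity
    have hFcont : ContinuousOn (fun X => ∫ u in (0:ℝ)..X, g u) (Icc 0 1) := by
      have := intervalIntegral.continuousOn_primitive_interval
        (f := g) (a := (0:ℝ)) (b := 1) (by rwa [uIcc_of_le zero_le_one])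
      rwa [uIcc_of_le zero_le_one] at this
    have hle : 𝓝[>] (0:ℝ) ≤ 𝓝[Icc (0:ℝ) 1] 0 := by
      rw [← nhdsWithin_inter_of_mem' (s := Ioi (0:ℝ))
        (mem_nhdsWithin_of_mem_nhds (Iic_mem_nhds one_pos))]
      exact nhdsWithin_mono _ (fun x hx => ⟨le_of_lt hx.1, hx.2⟩)
    have hFtend : Tendsto (fun X => ∫ u in (0:ℝ)..X, g u) (𝓝[>] (0:ℝ)) (𝓝 0) := by
      have := (hFcont 0 (left_mem_Icc.2 zero_le_one)).tendsto
      rw [intervalIntegral.integral_same] at this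
      exact this.mono_left hle
    have hGtend : Tendsto (fun X => (h - k * ∫ u in (0:ℝ)..X, g u) ^ (1/p))
        (𝓝[>] (0:ℝ)) (𝓝 (h ^ (1/p))) := by
      have hbase : Tendsto (fun X => h - k * ∫ u in (0:ℝ)..X, g u) (𝓝[>] (0:ℝ)) (𝓝 h) := by
        have := (tendsto_const_nhds : Tendsto (fun _ : ℝ => h) (𝓝[>] (0:ℝ)) (𝓝 h)).sub (hFtend.const_mul k)
        simpa using this
      exact ((Real.continuousAt_rpow_const h (1/p) (Or.inl (ne_of_gt hhpos))).tendsto).comp hbase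
    have hPow : Tendsto (fun X : ℝ => X ^ (-(1/(p-1)))) (𝓝[>] (0:ℝ)) atTop := by
      have h2 : Tendsto (fun X : ℝ => (X⁻¹) ^ (1/(p-1))) (𝓝[>] (0:ℝ)) atTop :=
        (tendsto_rpow_atTop (by positivity)).comp tendsto_inv_nhdsGT_zero
      refine h2.congr' ?_
      filter_upwards [self_mem_nhdsWithin] with x hx
      rw [← Real.rpow_neg_one x, ← Real.rpow_mul (le_of_lt hx)]
      norm_num
    have := hPow.atTop_mul_pos (Real.rpow_pos_of_pos hhpos (1/p)) hGtend
    exact this.congr (fun X => (hT₀ X).symm)
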